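/- Let (h_k)_{k≥0} be a non-decreasing real sequence with ∑_k 2^{−k} h_k < ∞, and for each n let Φ_n be the first order branching clustering function on 𝕃₀⁽ⁿ⁾ with parameters (h_k)_{k=0}^n and h = h_n. If κ₁ := ∑_{k=1}^∞ 2^k e^{−h_k} < ∞, then the sequence (Φ_n) exhibits a wetting transition, and moreover J* ∈ (2 ln 2 + h₀ − ln κ₁, ∞). -/

import Mathlib

open Filter
open scoped Classical

noncomputable section

namespace PWC

/-- Leaves of the binary tree `𝕋⁽ⁿ⁾` of depth `n`: binary words of length `n`
(coordinate `0` is the first step away from the root). -/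
abbrev Leaf (n : ℕ) := Fin n → Bool

/-- The age (distance from the leaves) of the youngest common ancestor `u ∧ v` of two
leaves: `n` minus the length of their longest common prefix. -/
def meetAge {n : ℕ} (u v : Leaf n) : ℕ :=
  if u = v then 0 else n - sInf {i : ℕ | ∃ h : i < n, u ⟨i, h⟩ ≠ v ⟨i, h⟩}

/-- Canonical representative (as a leaf) of the ancestor of `u` at age `k`:
keep the first `n - k` coordinates and pad by `false`. -/
def trunc {n : ℕ} (k : ℕ) (u : Leaf n) : Leaf n :=
  fun i => if (i : ℕ) < n - k then u i else false

/-- The branching points `ℬ(A) ∩ 𝕃_k` of `A` of age `k`, encoded by the canonical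
representatives of the corresponding ancestors. -/
def branchPts {n : ℕ} (A : Finset (Leaf n)) (k : ℕ) : Finset (Leaf n) :=
  ((A ×ˢ A).filter (fun p => meetAge p.1 p.2 = k)).image (fun p => trunc k p.1)

/-- `b_k(A)`: the number of branching points of `A` of age `k`. -/
def bcount {n : ℕ} (A : Finset (Leaf n)) (k : ℕ) : ℕ := (branchPts A k).card

/-- `b_{k,ℓ}(A)`: the number of branching points of `A` of age `ℓ` whose direct
branching ancestor has age `k`; for `k = n+1` the indicator that the oldest branching
point of `A` has age `ℓ` (i.e. the branching points at age `ℓ` having no strictly older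
branching ancestor). -/
def b2count {n : ℕ} (A : Finset (Leaf n)) (k l : ℕ) : ℕ :=
  if k = n + 1 then
    ((branchPts A l).filter (fun w => ∀ j, l < j → j ≤ n → trunc j w ∉ branchPts A j)).card
  else
    ((branchPts A l).filter (fun w => trunc k w ∈ branchPts A k ∧
      ∀ j, l < j → j < k → trunc j w ∉ branchPts A j)).card

/-- `A ≺ B` : `A` is more clustered than `B`. -/
def MoreClustered {n : ℕ} (A B : Finset (Leaf n)) : Prop :=
  ∃ σ : Leaf n → Leaf n, Set.BijOn σ ↑A ↑B ∧
    ∀ u ∈ A, ∀ v ∈ A, meetAge u v ≤ meetAge (σ u) (σ v)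

/-- `A ∼ B` : the subtrees of `𝕋⁽ⁿ⁾` generated by `A` and `B` are graph-isomorphic,
i.e. there is a bijection of the leaf sets preserving all meet ages. -/
def EquivClustered {n : ℕ} (A B : Finset (Leaf n)) : Prop :=
  ∃ σ : Leaf n → Leaf n, Set.BijOn σ ↑A ↑B ∧
    ∀ u ∈ A, ∀ v ∈ A, meetAge (σ u) (σ v) = meetAge u v

/-- A clustering function: vanishes on `∅` and is invariant under isomorphism of the
generated subtrees. -/
def IsClusteringFn {n : ℕ} (Φ : Finset (Leaf n) → ℝ) : Prop :=
  Φ ∅ = 0 ∧ ∀ A B : Finset (Leaf n), EquivClustered A B → Φ A = Φ B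

/-- A monotone clustering function. -/
def IsMonotoneClusteringFn {n : ℕ} (Φ : Finset (Leaf n) → ℝ) : Prop :=
  IsClusteringFn Φ ∧
    (∀ A B : Finset (Leaf n), MoreClustered A B → Φ A ≤ Φ B) ∧
    (∀ A B : Finset (Leaf n), Disjoint A B → Φ (A ∪ B) ≤ Φ A + Φ B)

/-- The partition function `Z_n^{Φ,J}`. -/
def Z (n : ℕ) (Φ : Finset (Leaf n) → ℝ) (J : ℝ) : ℝ :=
  ∑ A : Finset (Leaf n), Real.exp (J * (A.card : ℝ) - Φ A)

/-- The finite-volume free energy `ζ_n^Φ(J) = 2⁻ⁿ ln Z_n^{Φ,J}`. -/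
def zetaN (n : ℕ) (Φ : Finset (Leaf n) → ℝ) (J : ℝ) : ℝ :=
  Real.log (Z n Φ J) / 2 ^ n

/-- The canonical partition function `W_n^Φ(a₀)`. -/
def W (n : ℕ) (Φ : Finset (Leaf n) → ℝ) (a₀ : ℕ) : ℝ :=
  ∑ A ∈ Finset.univ.filter (fun A : Finset (Leaf n) => A.card = a₀), Real.exp (-Φ A)

/-- The finite-volume canonical free energy `ω_n^Φ(ε) = 2⁻ⁿ ln W_n^Φ(ε 2ⁿ)` (for a
dyadic `ε ∈ [0,1]` and `n` large, `⌊ε 2ⁿ⌋ = ε 2ⁿ`). -/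
def omegaN (n : ℕ) (Φ : Finset (Leaf n) → ℝ) (ε : ℝ) : ℝ :=
  Real.log (W n Φ ⌊ε * 2 ^ n⌋₊) / 2 ^ n

/-- The expected density `ρ_n^Φ(J)` of the dry set under the PWC measure. -/
def rhoN (n : ℕ) (Φ : Finset (Leaf n) → ℝ) (J : ℝ) : ℝ :=
  (∑ A : Finset (Leaf n), (A.card : ℝ) * Real.exp (J * (A.card : ℝ) - Φ A)) /
    (2 ^ n * Z n Φ J)

/-- A dyadic rational. -/
def IsDyadic (x : ℝ) : Prop := ∃ (k : ℤ) (m : ℕ), x = (k : ℝ) / 2 ^ m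

/-- The hypotheses of the general theory (Proposition 1.2): each `Φ_n` (for `n ≥ 1`) is
a monotone, non-negative clustering function, and `Φ_n(A) ≤ Φ_{n-1}(A) + γ_n` for any
`A` contained in the leaf set of one of the two subtrees of `𝕋⁽ⁿ⁾` rooted at a child of
the root (identified with `𝕋⁽ⁿ⁻¹⁾` by prepending the corresponding letter), where
`γ_n ≥ 0` and `∑ γ_n 2⁻ⁿ < ∞`. -/
structure GoodSeq (Φ : ∀ n, Finset (Fin n → Bool) → ℝ) (γ : ℕ → ℝ) : Prop where
  mono : ∀ n, 1 ≤ n → IsMonotoneClusteringFn (Φ n)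
  nonneg : ∀ n, 1 ≤ n → ∀ A, 0 ≤ Φ n A
  gamma_nonneg : ∀ n, 0 ≤ γ n
  gamma_summable : Summable fun n => γ n / 2 ^ n
  subtree : ∀ (n : ℕ) (b : Bool) (A : Finset (Fin n → Bool)),
    Φ (n + 1) (A.image fun u => Fin.cons b u) ≤ Φ n A + γ (n + 1)

/-- The first order branching clustering function with parameters `(h_k)_{k=0}^n`, `h`. -/
def foPhi (n : ℕ) (hs : ℕ → ℝ) (h : ℝ) (A : Finset (Leaf n)) : ℝ :=
  if A = ∅ then 0 else (∑ k ∈ Finset.range (n + 1), hs k * (bcount A k : ℝ)) + h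

/-- The second order branching clustering function with parameters
`(h_{k,ℓ})_{0 ≤ ℓ < k ≤ n+1}`, `h`. -/
def soPhi (n : ℕ) (H : ℕ → ℕ → ℝ) (h : ℝ) (A : Finset (Leaf n)) : ℝ :=
  if A = ∅ then 0
  else (∑ k ∈ Finset.range (n + 2), ∑ l ∈ Finset.range k, H k l * (b2count A k l : ℝ)) + h

/-- A non-decreasing (infinite) triangular array. -/
def ArrayMono (H : ℕ → ℕ → ℝ) : Prop :=
  ∀ k k' l l' : ℕ, l < k → l' < k' → k ≤ k' → l ≤ l' → H k l ≤ H k' l'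

/-- The Dirichlet energy on `𝕋⁽ⁿ⁾` of `f` (vertices encoded as words of length `≤ n`,
read from the root; a vertex of length `m` has age `n - m` and its parent edge has
conductance `C (n - m)`). -/
def energy (n : ℕ) (C : ℕ → ℝ) (f : List Bool → ℝ) : ℝ :=
  ∑ m ∈ Finset.Icc 1 n, ∑ v : Fin m → Bool,
    C (n - m) * (f (List.ofFn v) - f (List.ofFn v).dropLast) ^ 2

/-- The capacity of a set of leaves `A ⊆ 𝕃₀⁽ⁿ⁾`. -/
def cap (n : ℕ) (C : ℕ → ℝ) (A : Finset (Leaf n)) : ℝ :=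
  sInf {x : ℝ | ∃ f : List Bool → ℝ, f [] = 1 ∧ (∀ u ∈ A, f (List.ofFn u) = 0) ∧
    x = energy n C f}




lemma meetAge_self {n : ℕ} (u : Leaf n) : meetAge u u = 0 := by
  simp [meetAge]

lemma meetAge_le {n : ℕ} (u v : Leaf n) : meetAge u v ≤ n := by
  unfold meetAge; split <;> omega

lemma cons_injective {n : ℕ} (b : Bool) :
    Function.Injective (fun u : Leaf n => Fin.cons b u : Leaf n → Leaf (n+1)) := by
  intro u v h
  have := congrArg Fin.tail h
  simpa [Fin.tail_cons] using this

lemma meetAge_cons_same {n : ℕ} (b : Bool) (u v : Leaf n) :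
    meetAge (Fin.cons b u) (Fin.cons b v) = meetAge u v := by
  rcases eq_or_ne u v with rfl | hne
  · simp [meetAge]
  · have hcne : (Fin.cons b u : Leaf (n+1)) ≠ Fin.cons b v := fun h => hne (cons_injective b h)
    rw [meetAge, meetAge, if_neg hcne, if_neg hne]
    set D : Set ℕ := {i : ℕ | ∃ h : i < n, u ⟨i, h⟩ ≠ v ⟨i, h⟩} with hD
    set D' : Set ℕ := {i : ℕ | ∃ h : i < n + 1, (Fin.cons b u : Leaf (n+1)) ⟨i, h⟩ ≠ (Fin.cons b v : Leaf (n+1)) ⟨i, h⟩} with hD'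
    have hDne : D.Nonempty := by
      by_contra hemp
      apply hne
      funext i
      by_contra hiv
      exact hemp ⟨i, ⟨i.isLt, by simpa using hiv⟩⟩
    have hmem : ∀ i, i ∈ D' ↔ ∃ j, j ∈ D ∧ i = j + 1 := by
      intro i
      constructor
      · rintro ⟨hi, hne2⟩
        match i with
        | 0 =>
          exfalso
          apply hne2
          have h00 : (⟨0, hi⟩ : Fin (n+1)) = 0 := rfl
          rw [h00, Fin.cons_zero, Fin.cons_zero]
        | j+1 =>
          refine ⟨j, ⟨by omega, ?_⟩, rfl⟩
          have : (⟨j+1, hi⟩ : Fin (n+1)) = (⟨j, by omega⟩ : Fin n).succ := by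
            simp [Fin.succ]
          rw [this, Fin.cons_succ, Fin.cons_succ] at hne2
          exact hne2
      · rintro ⟨j, ⟨hj, hne2⟩, rfl⟩
        refine ⟨by omega, ?_⟩
        have : (⟨j+1, by omega⟩ : Fin (n+1)) = (⟨j, hj⟩ : Fin n).succ := by
          simp [Fin.succ]
        rw [this, Fin.cons_succ, Fin.cons_succ]
        exact hne2
    have hinf : sInf D' = sInf D + 1 := by
      have h1 : sInf D ∈ D := Nat.sInf_mem hDne
      have h2 : sInf D + 1 ∈ D' := (hmem _).2 ⟨sInf D, h1, rfl⟩
      have h3 : sInf D' ≤ sInf D + 1 := Nat.sInf_le h2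
      have h4 : sInf D' ∈ D' := Nat.sInf_mem ⟨_, h2⟩
      obtain ⟨j, hj, hje⟩ := (hmem _).1 h4
      have : sInf D ≤ j := Nat.sInf_le hj
      omega
    rw [hinf]
    have h1 : sInf D ∈ D := Nat.sInf_mem hDne
    obtain ⟨hlt, -⟩ := h1
    omega

lemma meetAge_cons_ne {n : ℕ} {b b' : Bool} (hbb : b ≠ b') (u v : Leaf n) :
    meetAge (Fin.cons b u) (Fin.cons b' v) = n + 1 := by
  have hne : (Fin.cons b u : Leaf (n+1)) ≠ Fin.cons b' v := by
    intro h
    exact hbb (by simpa using congrFun h 0)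
  rw [meetAge, if_neg hne]
  have h0 : (0 : ℕ) ∈ {i : ℕ | ∃ h : i < n + 1, (Fin.cons b u : Leaf (n+1)) ⟨i, h⟩ ≠ (Fin.cons b' v : Leaf (n+1)) ⟨i, h⟩} := by
    refine ⟨by omega, ?_⟩
    simpa [show (⟨0, by omega⟩ : Fin (n+1)) = 0 from rfl] using hbb
  have : sInf {i : ℕ | ∃ h : i < n + 1, (Fin.cons b u : Leaf (n+1)) ⟨i, h⟩ ≠ (Fin.cons b' v : Leaf (n+1)) ⟨i, h⟩} = 0 :=
    Nat.le_zero.1 (Nat.sInf_le h0)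
  omega

lemma trunc_cons {n k : ℕ} (hk : k ≤ n) (b : Bool) (u : Leaf n) :
    trunc k (Fin.cons b u) = Fin.cons b (trunc k u) := by
  funext i
  refine Fin.cases ?_ (fun j => ?_) i
  · simp [trunc]; omega
  · simp only [trunc, Fin.cons_succ]
    have : ((Fin.succ j : Fin (n+1)) : ℕ) = (j : ℕ) + 1 := rfl
    rw [this]
    by_cases hj : (j : ℕ) < n - k
    · rw [if_pos (by omega), if_pos hj]
    · rw [if_neg (by omega), if_neg hj]

lemma trunc_top {n : ℕ} (w : Leaf (n+1)) : trunc (n+1) w = fun _ => false := by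
  funext i
  simp [trunc]



/-- The two-subtree splitting map. -/
def split {n : ℕ} (P Q : Finset (Leaf n)) : Finset (Leaf (n+1)) :=
  P.image (fun u => Fin.cons false u) ∪ Q.image (fun u => Fin.cons true u)

lemma disjoint_cons_images {n : ℕ} (S T : Finset (Leaf n)) :
    Disjoint (S.image (fun u => (Fin.cons false u : Leaf (n+1))))
      (T.image (fun u => (Fin.cons true u : Leaf (n+1)))) := by
  rw [Finset.disjoint_left]
  rintro w hw hw'
  obtain ⟨x, hx, rfl⟩ := Finset.mem_image.1 hw
  obtain ⟨y, hy, he⟩ := Finset.mem_image.1 hw'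
  have := congrFun he 0
  simp [Fin.cons_zero] at this

lemma branchPts_split_low {n : ℕ} (P Q : Finset (Leaf n)) {k : ℕ} (hk : k ≤ n) :
    branchPts (split P Q) k
      = (branchPts P k).image (fun u => Fin.cons false u)
        ∪ (branchPts Q k).image (fun u => Fin.cons true u) := by
  apply Finset.Subset.antisymm
  · intro w hw
    obtain ⟨⟨p1, p2⟩, hp, rfl⟩ := Finset.mem_image.1 hw
    obtain ⟨hmem, hma⟩ := Finset.mem_filter.1 hp
    obtain ⟨h1, h2⟩ := Finset.mem_product.1 hmem
    rw [split, Finset.mem_union] at h1 h2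
    rcases h1 with h1 | h1 <;> obtain ⟨x, hx, rfl⟩ := Finset.mem_image.1 h1 <;>
      rcases h2 with h2 | h2 <;> obtain ⟨y, hy, rfl⟩ := Finset.mem_image.1 h2
    · rw [meetAge_cons_same] at hma
      apply Finset.mem_union_left
      rw [trunc_cons hk]
      exact Finset.mem_image_of_mem _ (Finset.mem_image.2
        ⟨(x, y), Finset.mem_filter.2 ⟨Finset.mem_product.2 ⟨hx, hy⟩, hma⟩, rfl⟩)
    · rw [meetAge_cons_ne (by simp)] at hma; omega
    · rw [meetAge_cons_ne (by simp)] at hma; omega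
    · rw [meetAge_cons_same] at hma
      apply Finset.mem_union_right
      rw [trunc_cons hk]
      exact Finset.mem_image_of_mem _ (Finset.mem_image.2
        ⟨(x, y), Finset.mem_filter.2 ⟨Finset.mem_product.2 ⟨hx, hy⟩, hma⟩, rfl⟩)
  · intro w hw
    rcases Finset.mem_union.1 hw with h | h <;> obtain ⟨z, hz, rfl⟩ := Finset.mem_image.1 h <;>
      obtain ⟨⟨x, y⟩, hp, rfl⟩ := Finset.mem_image.1 hz <;>
      obtain ⟨hmem, hma⟩ := Finset.mem_filter.1 hp <;>
      obtain ⟨hx, hy⟩ := Finset.mem_product.1 hmem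
    · refine Finset.mem_image.2 ⟨((Fin.cons false x : Leaf (n+1)), (Fin.cons false y : Leaf (n+1))),
        Finset.mem_filter.2 ⟨Finset.mem_product.2
          ⟨Finset.mem_union_left _ (Finset.mem_image_of_mem _ hx),
           Finset.mem_union_left _ (Finset.mem_image_of_mem _ hy)⟩,
          by rw [meetAge_cons_same]; exact hma⟩, ?_⟩
      rw [trunc_cons hk]
    · refine Finset.mem_image.2 ⟨((Fin.cons true x : Leaf (n+1)), (Fin.cons true y : Leaf (n+1))),
        Finset.mem_filter.2 ⟨Finset.mem_product.2
          ⟨Finset.mem_union_right _ (Finset.mem_image_of_mem _ hx),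
           Finset.mem_union_right _ (Finset.mem_image_of_mem _ hy)⟩,
          by rw [meetAge_cons_same]; exact hma⟩, ?_⟩
      rw [trunc_cons hk]

lemma branchPts_split_top {n : ℕ} (P Q : Finset (Leaf n)) :
    branchPts (split P Q) (n+1)
      = if P.Nonempty ∧ Q.Nonempty then {(fun _ => false : Leaf (n+1))} else ∅ := by
  apply Finset.Subset.antisymm
  · intro w hw
    obtain ⟨⟨p1, p2⟩, hp, rfl⟩ := Finset.mem_image.1 hw
    obtain ⟨hmem, hma⟩ := Finset.mem_filter.1 hp
    obtain ⟨h1, h2⟩ := Finset.mem_product.1 hmem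
    rw [split, Finset.mem_union] at h1 h2
    rcases h1 with h1 | h1 <;> obtain ⟨x, hx, rfl⟩ := Finset.mem_image.1 h1 <;>
      rcases h2 with h2 | h2 <;> obtain ⟨y, hy, rfl⟩ := Finset.mem_image.1 h2
    · rw [meetAge_cons_same] at hma; have := meetAge_le x y; omega
    · rw [if_pos ⟨⟨x, hx⟩, ⟨y, hy⟩⟩, Finset.mem_singleton, trunc_top]
    · rw [if_pos ⟨⟨y, hy⟩, ⟨x, hx⟩⟩, Finset.mem_singleton, trunc_top]
    · rw [meetAge_cons_same] at hma; have := meetAge_le x y; omega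
  · intro w hw
    by_cases h : P.Nonempty ∧ Q.Nonempty
    · rw [if_pos h, Finset.mem_singleton] at hw
      subst hw
      obtain ⟨⟨x, hx⟩, ⟨y, hy⟩⟩ := h
      refine Finset.mem_image.2 ⟨((Fin.cons false x : Leaf (n+1)), (Fin.cons true y : Leaf (n+1))),
        Finset.mem_filter.2 ⟨Finset.mem_product.2
          ⟨Finset.mem_union_left _ (Finset.mem_image_of_mem _ hx),
           Finset.mem_union_right _ (Finset.mem_image_of_mem _ hy)⟩,
          meetAge_cons_ne (by simp) x y⟩, ?_⟩
      rw [trunc_top]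
    · rw [if_neg h] at hw
      exact absurd hw (Finset.notMem_empty _)

lemma bcount_split_low {n : ℕ} (P Q : Finset (Leaf n)) {k : ℕ} (hk : k ≤ n) :
    bcount (split P Q) k = bcount P k + bcount Q k := by
  rw [bcount, branchPts_split_low P Q hk,
    Finset.card_union_of_disjoint (disjoint_cons_images _ _),
    Finset.card_image_of_injective _ (cons_injective false),
    Finset.card_image_of_injective _ (cons_injective true)]
  rfl

lemma bcount_split_top {n : ℕ} (P Q : Finset (Leaf n)) :
    bcount (split P Q) (n+1) = if P.Nonempty ∧ Q.Nonempty then 1 else 0 := by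
  rw [bcount, branchPts_split_top]
  split <;> simp

lemma card_split {n : ℕ} (P Q : Finset (Leaf n)) :
    (split P Q).card = P.card + Q.card := by
  rw [split, Finset.card_union_of_disjoint (disjoint_cons_images _ _),
    Finset.card_image_of_injective _ (cons_injective false),
    Finset.card_image_of_injective _ (cons_injective true)]

lemma split_bijective (n : ℕ) :
    Function.Bijective (fun PQ : Finset (Leaf n) × Finset (Leaf n) => split PQ.1 PQ.2) := by
  rw [Function.bijective_iff_has_inverse]
  refine ⟨fun A => (A.preimage (fun u => Fin.cons false u) ((cons_injective false).injOn),
                   A.preimage (fun u => Fin.cons true u) ((cons_injective true).injOn)), ?_, ?_⟩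
  · rintro ⟨P, Q⟩
    have hPQ : ∀ (b : Bool) (x : Leaf n), (Fin.cons b x : Leaf (n+1)) ∈ split P Q ↔
        (b = false ∧ x ∈ P) ∨ (b = true ∧ x ∈ Q) := by
      intro b x
      rw [split, Finset.mem_union]
      constructor
      · rintro (h | h) <;> obtain ⟨y, hy, he⟩ := Finset.mem_image.1 h
        · have hb : b = false := by simpa using (congrFun he 0).symm
          subst hb
          exact Or.inl ⟨rfl, by rwa [cons_injective false he] at hy⟩
        · have hb : b = true := by simpa using (congrFun he 0).symm
          subst hb
          exact Or.inr ⟨rfl, by rwa [cons_injective true he] at hy⟩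
      · rintro (⟨rfl, hx⟩ | ⟨rfl, hx⟩)
        · exact Or.inl (Finset.mem_image_of_mem _ hx)
        · exact Or.inr (Finset.mem_image_of_mem _ hx)
    ext x
    · rw [Finset.mem_preimage, hPQ]; simp
    · rw [Finset.mem_preimage, hPQ]; simp
  · intro A
    ext w
    simp only [split, Finset.mem_union]
    constructor
    · rintro (h | h) <;> obtain ⟨y, hy, rfl⟩ := Finset.mem_image.1 h <;>
        exact Finset.mem_preimage.1 hy
    · intro hw
      have hw' : w = Fin.cons (w 0) (Fin.tail w) := (Fin.cons_self_tail w).symm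
      cases hb : w 0
      · left
        refine Finset.mem_image.2 ⟨Fin.tail w, Finset.mem_preimage.2 ?_, ?_⟩ <;>
          rw [← hb, ← hw'] <;> try exact hw
      · right
        refine Finset.mem_image.2 ⟨Fin.tail w, Finset.mem_preimage.2 ?_, ?_⟩ <;>
          rw [← hb, ← hw'] <;> try exact hw



variable (hs : ℕ → ℝ) (J : ℝ)

def Sfun (n : ℕ) (A : Finset (Leaf n)) : ℝ :=
  Real.exp (J * A.card - ∑ k ∈ Finset.range (n+1), hs k * (bcount A k : ℝ))

def Tsum (n : ℕ) : ℝ := ∑ A : Finset (Leaf n), Sfun hs J n A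

lemma bcount_empty (n k : ℕ) : bcount (∅ : Finset (Leaf n)) k = 0 := by
  simp [bcount, branchPts]

lemma Sfun_empty (n : ℕ) : Sfun hs J n (∅ : Finset (Leaf n)) = 1 := by
  simp [Sfun, bcount_empty]

lemma Sfun_pos (n : ℕ) (A : Finset (Leaf n)) : 0 < Sfun hs J n A := Real.exp_pos _

lemma Sfun_split (n : ℕ) (P Q : Finset (Leaf n)) :
    Sfun hs J (n+1) (split P Q)
      = Sfun hs J n P * Sfun hs J n Q *
        (if P.Nonempty ∧ Q.Nonempty then Real.exp (-hs (n+1)) else 1) := by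
  have hsum : ∑ k ∈ Finset.range (n+1+1), hs k * (bcount (split P Q) k : ℝ)
      = (∑ k ∈ Finset.range (n+1), hs k * (bcount P k : ℝ))
        + (∑ k ∈ Finset.range (n+1), hs k * (bcount Q k : ℝ))
        + hs (n+1) * (if P.Nonempty ∧ Q.Nonempty then (1:ℝ) else 0) := by
    rw [Finset.sum_range_succ]
    congr 1
    · rw [← Finset.sum_add_distrib]
      refine Finset.sum_congr rfl fun k hk => ?_
      have hk' : k ≤ n := Nat.lt_succ_iff.mp (Finset.mem_range.1 hk)
      rw [bcount_split_low P Q hk']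
      push_cast; ring
    · rw [bcount_split_top]
      split <;> simp
  rw [Sfun, Sfun, Sfun, hsum, card_split]
  by_cases h : P.Nonempty ∧ Q.Nonempty
  · rw [if_pos h, if_pos h, ← Real.exp_add, ← Real.exp_add]
    congr 1
    push_cast; ring
  · rw [if_neg h, if_neg h, mul_one, ← Real.exp_add]
    congr 1
    push_cast; ring

lemma Tsum_succ (n : ℕ) :
    Tsum hs J (n+1)
      = (Tsum hs J n) ^ 2 + (Real.exp (-hs (n+1)) - 1) * (Tsum hs J n - 1) ^ 2 := by
  classical
  set i : Finset (Leaf n) → ℝ := fun P => if P.Nonempty then 1 else 0 with hi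
  have key : ∀ PQ : Finset (Leaf n) × Finset (Leaf n),
      Sfun hs J n PQ.1 * Sfun hs J n PQ.2
        + (Real.exp (-hs (n+1)) - 1) * ((Sfun hs J n PQ.1 * i PQ.1) * (Sfun hs J n PQ.2 * i PQ.2))
      = Sfun hs J (n+1) (split PQ.1 PQ.2) := by
    rintro ⟨P, Q⟩
    rw [Sfun_split]
    by_cases h : P.Nonempty ∧ Q.Nonempty
    · rw [if_pos h, hi]
      simp only [if_pos h.1, if_pos h.2]
      ring
    · rw [if_neg h, hi]
      rcases not_and_or.mp h with h' | h'
      · simp only [if_neg h']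
        ring
      · simp only [if_neg h']
        ring
  have hbij := Fintype.sum_bijective _ (split_bijective n)
    (fun PQ : Finset (Leaf n) × Finset (Leaf n) =>
      Sfun hs J n PQ.1 * Sfun hs J n PQ.2
        + (Real.exp (-hs (n+1)) - 1) * ((Sfun hs J n PQ.1 * i PQ.1) * (Sfun hs J n PQ.2 * i PQ.2)))
    (Sfun hs J (n+1)) key
  have hTm1 : ∑ P : Finset (Leaf n), Sfun hs J n P * i P = Tsum hs J n - 1 := by
    have : ∀ P : Finset (Leaf n), Sfun hs J n P * i P
        = Sfun hs J n P - (if P = ∅ then 1 else 0) := by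
      intro P
      simp only [hi]
      rcases P.eq_empty_or_nonempty with rfl | h
      · simp [Sfun_empty, Finset.not_nonempty_empty]
      · rw [if_pos h, if_neg h.ne_empty]; ring
    rw [Finset.sum_congr rfl (fun P _ => this P), Finset.sum_sub_distrib]
    congr 1
    rw [Finset.sum_ite_eq' Finset.univ (∅ : Finset (Leaf n)) (fun _ => (1:ℝ)),
      if_pos (Finset.mem_univ _)]
  calc Tsum hs J (n+1)
      = ∑ PQ : Finset (Leaf n) × Finset (Leaf n),
          (Sfun hs J n PQ.1 * Sfun hs J n PQ.2
            + (Real.exp (-hs (n+1)) - 1) * ((Sfun hs J n PQ.1 * i PQ.1) * (Sfun hs J n PQ.2 * i PQ.2))) := by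
        rw [Tsum, ← hbij]
    _ = (∑ P : Finset (Leaf n), Sfun hs J n P) * (∑ Q : Finset (Leaf n), Sfun hs J n Q)
        + (Real.exp (-hs (n+1)) - 1)
          * ((∑ P : Finset (Leaf n), Sfun hs J n P * i P) * (∑ Q : Finset (Leaf n), Sfun hs J n Q * i Q)) := by
        rw [Finset.sum_add_distrib]
        simp only [Fintype.sum_prod_type]
        congr 1
        · rw [Finset.sum_mul_sum]
        · rw [Finset.sum_mul_sum, Finset.mul_sum]
          refine Finset.sum_congr rfl fun a _ => ?_
          rw [Finset.mul_sum]
    _ = (Tsum hs J n) ^ 2 + (Real.exp (-hs (n+1)) - 1) * (Tsum hs J n - 1) ^ 2 := by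
        rw [hTm1, Tsum]; ring

lemma meetAge_self' {n : ℕ} (u : Leaf n) : meetAge u u = 0 := by
  simp [meetAge]

lemma Tsum_zero : Tsum hs J 0 = 1 + Real.exp (J - hs 0) := by
  classical
  set z : Leaf 0 := (fun i => i.elim0) with hz
  have huniv : (Finset.univ : Finset (Finset (Leaf 0))) = {∅, {z}} := by
    ext A
    simp only [Finset.mem_univ, Finset.mem_insert, Finset.mem_singleton, true_iff]
    rcases A.eq_empty_or_nonempty with rfl | ⟨x, hx⟩
    · exact Or.inl rfl
    · right
      apply Finset.eq_singleton_iff_unique_mem.2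
      exact ⟨by rwa [Subsingleton.elim z x], fun y _ => Subsingleton.elim y z⟩
  have hbz : bcount {z} 0 = 1 := by
    rw [bcount, branchPts, Finset.singleton_product_singleton]
    rw [Finset.filter_singleton, if_pos (meetAge_self' z)]
    simp
  have hSz : Sfun hs J 0 {z} = Real.exp (J - hs 0) := by
    rw [Sfun]
    congr 1
    rw [Finset.sum_range_one, hbz]
    simp
  rw [Tsum, huniv, Finset.sum_pair (Ne.symm (Finset.singleton_ne_empty z)),
    Sfun_empty, hSz]

/-- The analytic recursion for the subtree partition function. -/
def gseq : ℕ → ℝ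
  | 0 => Real.exp (J - hs 0)
  | n+1 => 2 * gseq n + Real.exp (-hs (n+1)) * (gseq n) ^ 2

lemma Tsum_eq_gseq (n : ℕ) : Tsum hs J n = 1 + gseq hs J n := by
  induction n with
  | zero => rw [Tsum_zero]; rfl
  | succ n ih =>
    rw [Tsum_succ, ih, gseq]
    ring

lemma Z_eq (n : ℕ) :
    Z n (foPhi n hs (hs n)) J = 1 + Real.exp (-hs n) * gseq hs J n := by
  have hpt : ∀ A : Finset (Leaf n),
      Real.exp (J * A.card - foPhi n hs (hs n) A)
        = Real.exp (-hs n) * Sfun hs J n A + (if A = ∅ then 1 - Real.exp (-hs n) else 0) := by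
    intro A
    rcases eq_or_ne A ∅ with rfl | hA
    · rw [foPhi, if_pos rfl, Sfun_empty, if_pos rfl]
      simp
    · rw [foPhi, if_neg hA, if_neg hA, Sfun, ← Real.exp_add]
      rw [add_zero]
      congr 1
      ring
  rw [Z, Finset.sum_congr rfl (fun A _ => hpt A), Finset.sum_add_distrib,
    ← Finset.mul_sum, ← Tsum]
  rw [Finset.sum_ite_eq' Finset.univ (∅ : Finset (Leaf n)) (fun _ => 1 - Real.exp (-hs n)),
    if_pos (Finset.mem_univ _), Tsum_eq_gseq]
  ring



lemma gseq_pos (n : ℕ) : 0 < gseq hs J n := by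
  induction n with
  | zero => exact Real.exp_pos _
  | succ n ih => rw [gseq]; positivity

lemma Z_ge_one (n : ℕ) : 1 ≤ Z n (foPhi n hs (hs n)) J := by
  rw [Z_eq]
  nlinarith [gseq_pos hs J n, Real.exp_pos (-hs n)]

lemma zetaN_nonneg (n : ℕ) : 0 ≤ zetaN n (foPhi n hs (hs n)) J := by
  rw [zetaN]
  have h1 := Z_ge_one hs J n
  have : (0:ℝ) ≤ Real.log (Z n (foPhi n hs (hs n)) J) := Real.log_nonneg h1
  positivity

lemma zetaN_antitone (hmono : Monotone hs) :
    Antitone (fun n => zetaN n (foPhi n hs (hs n)) J) := by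
  apply antitone_nat_of_succ_le
  intro n
  have hg := gseq_pos hs J n
  have he : Real.exp (-hs (n+1)) ≤ Real.exp (-hs n) :=
    Real.exp_le_exp.2 (neg_le_neg (hmono (Nat.le_succ n)))
  have hZ1 : Z (n+1) (foPhi (n+1) hs (hs (n+1))) J
      = (1 + Real.exp (-hs (n+1)) * gseq hs J n) ^ 2 := by
    rw [Z_eq, gseq]; ring
  have hsq : (1 + Real.exp (-hs (n+1)) * gseq hs J n) ^ 2
      ≤ (Z n (foPhi n hs (hs n)) J) ^ 2 := by
    rw [Z_eq]
    have h0 : (0:ℝ) ≤ 1 + Real.exp (-hs (n+1)) * gseq hs J n := by positivity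
    have : 1 + Real.exp (-hs (n+1)) * gseq hs J n ≤ 1 + Real.exp (-hs n) * gseq hs J n := by
      nlinarith
    nlinarith
  have hpos : (0:ℝ) < (1 + Real.exp (-hs (n+1)) * gseq hs J n) ^ 2 := by positivity
  have hlog : Real.log (Z (n+1) (foPhi (n+1) hs (hs (n+1))) J)
      ≤ 2 * Real.log (Z n (foPhi n hs (hs n)) J) := by
    rw [hZ1]
    calc Real.log ((1 + Real.exp (-hs (n+1)) * gseq hs J n) ^ 2)
        ≤ Real.log ((Z n (foPhi n hs (hs n)) J) ^ 2) := Real.log_le_log hpos hsq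
      _ = 2 * Real.log (Z n (foPhi n hs (hs n)) J) := by
          rw [Real.log_pow]; push_cast; ring
  rw [zetaN, zetaN]
  rw [div_le_div_iff₀ (by positivity) (by positivity)]
  calc Real.log (Z (n+1) (foPhi (n+1) hs (hs (n+1))) J) * 2 ^ n
      ≤ (2 * Real.log (Z n (foPhi n hs (hs n)) J)) * 2 ^ n := by
        apply mul_le_mul_of_nonneg_right hlog (by positivity)
    _ = Real.log (Z n (foPhi n hs (hs n)) J) * 2 ^ (n+1) := by ring

/-- The limiting free energy. -/
def zeta : ℝ := ⨅ n, zetaN n (foPhi n hs (hs n)) J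

lemma zeta_tendsto (hmono : Monotone hs) :
    Tendsto (fun n => zetaN n (foPhi n hs (hs n)) J) atTop (nhds (zeta hs J)) := by
  apply tendsto_atTop_ciInf (zetaN_antitone hs J hmono)
  exact ⟨0, fun x hx => by obtain ⟨n, rfl⟩ := hx; exact zetaN_nonneg hs J n⟩

lemma log_gseq_lb (n : ℕ) :
    (J - hs 0) - ∑ k ∈ Finset.Icc 1 n, hs k / 2 ^ k ≤ Real.log (gseq hs J n) / 2 ^ n := by
  induction n with
  | zero => simp [gseq, Real.log_exp]
  | succ n ih =>
    have hg := gseq_pos hs J n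
    have hstep : Real.log (gseq hs J n) * 2 - hs (n+1) ≤ Real.log (gseq hs J (n+1)) := by
      have hle : Real.exp (-hs (n+1)) * (gseq hs J n) ^ 2 ≤ gseq hs J (n+1) := by
        rw [gseq]; nlinarith
      have hpos : (0:ℝ) < Real.exp (-hs (n+1)) * (gseq hs J n) ^ 2 := by positivity
      calc Real.log (gseq hs J n) * 2 - hs (n+1)
          = Real.log (Real.exp (-hs (n+1)) * (gseq hs J n) ^ 2) := by
            rw [Real.log_mul (Real.exp_ne_zero _) (by positivity), Real.log_exp,
              Real.log_pow]
            push_cast; ring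
        _ ≤ Real.log (gseq hs J (n+1)) := Real.log_le_log hpos hle
    rw [Finset.sum_Icc_succ_top (by omega : 1 ≤ n + 1)]
    have h2 : (0:ℝ) < (2:ℝ) ^ (n+1) := by positivity
    have e0 : (Real.log (gseq hs J n) * 2 - hs (n+1)) / 2 ^ (n+1)
        = Real.log (gseq hs J n) / 2 ^ n - hs (n+1) / 2 ^ (n+1) := by
      rw [pow_succ]
      field_simp
    have e1 : Real.log (gseq hs J n) / 2 ^ n - hs (n+1) / 2 ^ (n+1)
        ≤ Real.log (gseq hs J (n+1)) / 2 ^ (n+1) := by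
      rw [← e0]
      exact (div_le_div_iff_of_pos_right h2).2 hstep
    linarith


lemma habs_summable (hmono : Monotone hs) (hsum : Summable fun k : ℕ => hs k / 2 ^ k) :
    Summable fun k : ℕ => |hs k| / 2 ^ k := by
  have hgeo : Summable fun k : ℕ => ((1:ℝ)/2) ^ k :=
    summable_geometric_of_lt_one (by norm_num) (by norm_num)
  have hmaj : Summable fun k : ℕ => hs k / 2 ^ k + (|hs 0| - hs 0) * ((1:ℝ)/2) ^ k :=
    hsum.add (hgeo.mul_left _)
  apply Summable.of_nonneg_of_le (fun k => by positivity) _ hmaj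
  intro k
  have h0k : hs 0 ≤ hs k := hmono (Nat.zero_le k)
  have hpow : ((1:ℝ)/2) ^ k = 1 / 2 ^ k := by
    rw [div_pow, one_pow]
  rw [hpow]
  have h2k : (0:ℝ) < 2 ^ k := by positivity
  have habs : |hs k| ≤ hs k + (|hs 0| - hs 0) := by
    rcases abs_cases (hs k) with ⟨he, hsg⟩ | ⟨he, hsg⟩ <;>
      rcases abs_cases (hs 0) with ⟨h0, h0g⟩ | ⟨h0, h0g⟩ <;> linarith
  have heq : hs k / 2 ^ k + (|hs 0| - hs 0) * (1 / 2 ^ k)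
      = (hs k + (|hs 0| - hs 0)) / 2 ^ k := by
    field_simp
  rw [heq]
  gcongr


lemma zeta_lb (hmono : Monotone hs) (hsum : Summable fun k : ℕ => hs k / 2 ^ k) :
    J - hs 0 - 2 * (∑' k : ℕ, |hs k| / 2 ^ k) ≤ zeta hs J := by
  have habs := habs_summable hs hmono hsum
  set K := ∑' k : ℕ, |hs k| / 2 ^ k with hK
  apply le_ciInf
  intro n
  have hg := gseq_pos hs J n
  have hZ : Real.exp (-hs n) * gseq hs J n ≤ Z n (foPhi n hs (hs n)) J := by
    rw [Z_eq]; nlinarith [Real.exp_pos (-hs n), gseq_pos hs J n]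
  have hlog : -hs n + Real.log (gseq hs J n) ≤ Real.log (Z n (foPhi n hs (hs n)) J) := by
    calc -hs n + Real.log (gseq hs J n)
        = Real.log (Real.exp (-hs n) * gseq hs J n) := by
          rw [Real.log_mul (Real.exp_ne_zero _) (ne_of_gt hg), Real.log_exp]
      _ ≤ _ := Real.log_le_log (by positivity) hZ
  have hsum1 : ∑ k ∈ Finset.Icc 1 n, hs k / 2 ^ k ≤ K := by
    calc ∑ k ∈ Finset.Icc 1 n, hs k / 2 ^ k
        ≤ ∑ k ∈ Finset.Icc 1 n, |hs k| / 2 ^ k := by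
          apply Finset.sum_le_sum
          intro k _
          apply div_le_div_of_nonneg_right (le_abs_self _) (by positivity)
      _ ≤ K := Summable.sum_le_tsum _ (fun k _ => by positivity) habs
  have hsn : hs n / 2 ^ n ≤ K := by
    calc hs n / 2 ^ n ≤ |hs n| / 2 ^ n :=
          div_le_div_of_nonneg_right (le_abs_self _) (by positivity)
      _ ≤ K := Summable.le_tsum habs n (fun k _ => by positivity)
  have hlb := log_gseq_lb hs J n
  rw [zetaN]
  have h2 : (0:ℝ) < (2:ℝ) ^ n := by positivity
  rw [le_div_iff₀ h2]
  have e1 : (-hs n + Real.log (gseq hs J n)) = (Real.log (gseq hs J n) / 2 ^ n - hs n / 2 ^ n) * 2 ^ n := by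
    field_simp
    ring
  calc (J - hs 0 - 2 * K) * 2 ^ n
      ≤ (Real.log (gseq hs J n) / 2 ^ n - hs n / 2 ^ n) * 2 ^ n := by
        apply mul_le_mul_of_nonneg_right _ h2.le
        have : J - hs 0 - K ≤ Real.log (gseq hs J n) / 2 ^ n := by linarith
        linarith
    _ = -hs n + Real.log (gseq hs J n) := e1.symm
    _ ≤ Real.log (Z n (foPhi n hs (hs n)) J) := hlog

lemma one_div_key {x cc : ℝ} (hx : 0 < x) (hcc : 0 < cc) :
    1 / x - cc ≤ 1 / (x + cc * x ^ 2) := by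
  have hx2 : (0:ℝ) < x + cc * x ^ 2 := by positivity
  have hi : (0:ℝ) < 1 / (x + cc * x ^ 2) := by positivity
  have hinv : (1 / (x + cc * x ^ 2)) * (x + cc * x ^ 2) = 1 := by field_simp
  rw [sub_le_iff_le_add, div_le_iff₀ hx]
  nlinarith [mul_nonneg (mul_nonneg hi.le hcc.le) (sq_nonneg x), mul_pos hcc hx]

lemma nu_lb (n : ℕ) (hn : 1 ≤ n) :
    2 / gseq hs J 1 - (1/4) * ∑ k ∈ Finset.Icc 2 n, (2:ℝ) ^ k * Real.exp (-hs k)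
      ≤ 2 ^ n / gseq hs J n := by
  induction n, hn using Nat.le_induction with
  | base =>
    rw [Finset.Icc_eq_empty (by omega)]
    simp [pow_one]
  | succ n hn ih =>
    have hg := gseq_pos hs J n
    have hgrec : gseq hs J (n+1) = 2 * gseq hs J n + (Real.exp (-hs (n+1)) / 4) * (2 * gseq hs J n) ^ 2 := by
      rw [gseq]; ring
    have hkey := one_div_key (x := 2 * gseq hs J n) (cc := Real.exp (-hs (n+1)) / 4)
      (by positivity) (by positivity)
    rw [← hgrec] at hkey
    have h2p : (0:ℝ) < (2:ℝ) ^ (n+1) := by positivity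
    have hmul := mul_le_mul_of_nonneg_left hkey h2p.le
    have e1 : (2:ℝ) ^ (n+1) * (1 / (2 * gseq hs J n)) = 2 ^ n / gseq hs J n := by
      rw [pow_succ]; field_simp
    have e2 : (2:ℝ) ^ (n+1) * (1 / gseq hs J (n+1)) = 2 ^ (n+1) / gseq hs J (n+1) := by
      field_simp
    rw [mul_sub, e1, e2] at hmul
    rw [Finset.sum_Icc_succ_top (by omega : 2 ≤ n + 1)]
    have := ih
    nlinarith [hmul]


lemma sum_Icc_one_le (hκ : Summable fun k : ℕ => (2 : ℝ) ^ (k + 1) * Real.exp (-hs (k + 1)))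
    (n : ℕ) :
    ∑ k ∈ Finset.Icc 1 n, (2:ℝ) ^ k * Real.exp (-hs k)
      ≤ ∑' k : ℕ, (2 : ℝ) ^ (k + 1) * Real.exp (-hs (k + 1)) := by
  rw [← Finset.Ico_add_one_right_eq_Icc, Finset.sum_Ico_eq_sum_range]
  have : ∀ i ∈ Finset.range (n + 1 - 1), (2:ℝ) ^ (1 + i) * Real.exp (-hs (1 + i))
      = (2:ℝ) ^ (i + 1) * Real.exp (-hs (i + 1)) := by
    intro i _
    rw [add_comm 1 i]
  rw [Finset.sum_congr rfl this]
  exact Summable.sum_le_tsum _ (fun k _ => by positivity) hκ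

lemma sum_Icc_two_le (hκ : Summable fun k : ℕ => (2 : ℝ) ^ (k + 1) * Real.exp (-hs (k + 1)))
    {n : ℕ} (hn : 1 ≤ n) :
    ∑ k ∈ Finset.Icc 2 n, (2:ℝ) ^ k * Real.exp (-hs k)
      ≤ (∑' k : ℕ, (2 : ℝ) ^ (k + 1) * Real.exp (-hs (k + 1))) - 2 * Real.exp (-hs 1) := by
  have hIns : Finset.Icc 1 n = insert 1 (Finset.Icc 2 n) := by
    ext x
    simp only [Finset.mem_Icc, Finset.mem_insert]
    omega
  have h1 : (1:ℕ) ∉ Finset.Icc 2 n := by simp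
  have hsum := sum_Icc_one_le hs hκ n
  rw [hIns, Finset.sum_insert h1] at hsum
  have : (2:ℝ) ^ (1:ℕ) * Real.exp (-hs 1) = 2 * Real.exp (-hs 1) := by norm_num
  rw [this] at hsum
  linarith

lemma zeta_zero (hκ : Summable fun k : ℕ => (2 : ℝ) ^ (k + 1) * Real.exp (-hs (k + 1)))
    (hν : 0 < 2 / gseq hs J 1
      - ((∑' k : ℕ, (2 : ℝ) ^ (k + 1) * Real.exp (-hs (k + 1))) - 2 * Real.exp (-hs 1)) / 4) :
    zeta hs J ≤ 0 := by
  set κ := ∑' k : ℕ, (2 : ℝ) ^ (k + 1) * Real.exp (-hs (k + 1)) with hκdef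
  set ν := 2 / gseq hs J 1 - (κ - 2 * Real.exp (-hs 1)) / 4 with hν' 
  have hκ0 : 0 ≤ κ := tsum_nonneg (fun k => by positivity)
  have hnu : ∀ n : ℕ, 1 ≤ n → ν ≤ 2 ^ n / gseq hs J n := by
    intro n hn
    have h1 := nu_lb hs J n hn
    have h2 := sum_Icc_two_le hs hκ hn
    rw [hν']
    calc 2 / gseq hs J 1 - (κ - 2 * Real.exp (-hs 1)) / 4
        ≤ 2 / gseq hs J 1 - (1/4) * ∑ k ∈ Finset.Icc 2 n, (2:ℝ) ^ k * Real.exp (-hs k) := by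
          linarith
      _ ≤ 2 ^ n / gseq hs J n := h1
  have hgle : ∀ n : ℕ, 1 ≤ n → Real.exp (-hs n) * gseq hs J n ≤ κ / ν := by
    intro n hn
    have hg := gseq_pos hs J n
    have h2n : (0:ℝ) < (2:ℝ) ^ n := by positivity
    have hgb : gseq hs J n ≤ 2 ^ n / ν := by
      rw [le_div_iff₀ hν, mul_comm]
      calc ν * gseq hs J n ≤ (2 ^ n / gseq hs J n) * gseq hs J n :=
            mul_le_mul_of_nonneg_right (hnu n hn) hg.le
        _ = 2 ^ n := by field_simp
    have hterm : (2:ℝ) ^ n * Real.exp (-hs n) ≤ κ := by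
      obtain ⟨m, rfl⟩ := Nat.exists_eq_add_of_le hn
      have := Summable.le_tsum hκ m (fun k _ => by positivity)
      calc (2:ℝ) ^ (1 + m) * Real.exp (-hs (1 + m))
          = (2:ℝ) ^ (m + 1) * Real.exp (-hs (m + 1)) := by rw [add_comm 1 m]
        _ ≤ κ := this
    calc Real.exp (-hs n) * gseq hs J n
        ≤ Real.exp (-hs n) * (2 ^ n / ν) :=
          mul_le_mul_of_nonneg_left hgb (Real.exp_pos _).le
      _ = (2 ^ n * Real.exp (-hs n)) / ν := by ring
      _ ≤ κ / ν := div_le_div_of_nonneg_right hterm hν.le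
  have hC0 : (0:ℝ) ≤ Real.log (1 + κ / ν) := by
    apply Real.log_nonneg
    have : 0 ≤ κ / ν := div_nonneg hκ0 hν.le
    linarith
  set C := Real.log (1 + κ / ν) with hC
  have hzn : ∀ m : ℕ, zeta hs J ≤ C * (1/2) ^ m := by
    intro m
    have hbdd : BddBelow (Set.range fun n => zetaN n (foPhi n hs (hs n)) J) :=
      ⟨0, fun x hx => by obtain ⟨n, rfl⟩ := hx; exact zetaN_nonneg hs J n⟩
    have hle : zeta hs J ≤ zetaN (m+1) (foPhi (m+1) hs (hs (m+1))) J := ciInf_le hbdd (m+1)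
    have hZle : Z (m+1) (foPhi (m+1) hs (hs (m+1))) J ≤ 1 + κ / ν := by
      rw [Z_eq]
      have := hgle (m+1) (by omega)
      linarith
    have hlogle : Real.log (Z (m+1) (foPhi (m+1) hs (hs (m+1))) J) ≤ C := by
      rw [hC]
      apply Real.log_le_log _ hZle
      have := Z_ge_one hs J (m+1)
      linarith
    have h2m : (0:ℝ) < (2:ℝ) ^ (m+1) := by positivity
    calc zeta hs J ≤ zetaN (m+1) (foPhi (m+1) hs (hs (m+1))) J := hle
      _ = Real.log (Z (m+1) (foPhi (m+1) hs (hs (m+1))) J) / 2 ^ (m+1) := rfl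
      _ ≤ C / 2 ^ (m+1) := div_le_div_of_nonneg_right hlogle h2m.le
      _ ≤ C * (1/2) ^ m := by
          rw [div_pow, one_pow, div_eq_mul_one_div C ((2:ℝ)^(m+1))]
          apply mul_le_mul_of_nonneg_left _ hC0
          rw [div_le_div_iff₀ (by positivity) (by positivity)]
          have : (2:ℝ) ^ m ≤ 2 ^ (m+1) := by
            apply pow_le_pow_right₀ (by norm_num)
            omega
          linarith
  have htend : Tendsto (fun m : ℕ => C * (1/2) ^ m) atTop (nhds 0) := by
    have := tendsto_pow_atTop_nhds_zero_of_lt_one (by norm_num : (0:ℝ) ≤ 1/2) (by norm_num : (1:ℝ)/2 < 1)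
    simpa using this.const_mul C
  exact ge_of_tendsto htend (Filter.Eventually.of_forall hzn)


theorem stmt7' (hs : ℕ → ℝ) (hmono : Monotone hs)
    (hsum : Summable fun k : ℕ => hs k / 2 ^ k)
    (hκ : Summable fun k : ℕ => (2 : ℝ) ^ (k + 1) * Real.exp (-hs (k + 1))) :
    ∃ ζ : ℝ → ℝ,
      (∀ J : ℝ, Tendsto (fun n => zetaN n (foPhi n hs (hs n)) J) atTop (nhds (ζ J))) ∧
      ∃ Js : ℝ, IsGLB {J : ℝ | 0 < ζ J} Js ∧
        2 * Real.log 2 + hs 0 -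
          Real.log (∑' k : ℕ, (2 : ℝ) ^ (k + 1) * Real.exp (-hs (k + 1))) < Js := by
  classical
  set κ := ∑' k : ℕ, (2 : ℝ) ^ (k + 1) * Real.exp (-hs (k + 1)) with hκdef
  set c := Real.exp (-hs 1) with hcdef
  have hc : 0 < c := Real.exp_pos _
  have hκ1 : 2 * c ≤ κ := by
    have := Summable.le_tsum hκ 0 (fun k _ => by positivity)
    calc 2 * c = (2:ℝ) ^ (0+1) * Real.exp (-hs (0+1)) := by norm_num [hcdef]
      _ ≤ κ := this
  have hκpos : 0 < κ := by linarith
  -- the comparison function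
  set F : ℝ → ℝ := fun x => 2 / (2*x + c*x^2) - (κ - 2*c)/4 with hFdef
  have hden : ∀ x : ℝ, 0 < x → (0:ℝ) < 2*x + c*x^2 := fun x hx => by positivity
  have hx0 : (0:ℝ) < 4/κ := by positivity
  have hF0 : 0 < F (4/κ) := by
    have he : F (4/κ) = c^2 / (κ + 2*c) := by
      rw [hFdef]
      have h1 : (0:ℝ) < 2*(4/κ) + c*(4/κ)^2 := hden _ hx0
      field_simp
      ring
    rw [he]
    positivity
  have hFanti : ∀ x y : ℝ, 0 < x → x ≤ y → F y ≤ F x := by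
    intro x y hx hxy
    rw [hFdef]
    simp only
    apply sub_le_sub_right
    apply div_le_div_of_nonneg_left (by norm_num) (hden x hx)
    nlinarith [mul_nonneg (mul_nonneg hc.le (sub_nonneg.2 hxy)) (by linarith : (0:ℝ) ≤ y + x)]
  have hcont : ContinuousAt F (4/κ) := by
    have hd : (2:ℝ)*(4/κ) + c*(4/κ)^2 ≠ 0 := ne_of_gt (hden _ hx0)
    have hD : ContinuousAt (fun x : ℝ => 2*x + c*x^2) (4/κ) := by fun_prop
    exact ((continuousAt_const.div hD hd).sub continuousAt_const)
  -- pick x̄ slightly above 4/κ with F x̄ > 0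
  obtain ⟨xb, hxbF, hxbgt⟩ : ∃ x : ℝ, 0 < F x ∧ 4/κ < x := by
    have h1 : F ⁻¹' (Set.Ioi 0) ∈ nhds (4/κ) :=
      hcont.preimage_mem_nhds (Ioi_mem_nhds hF0)
    have h2 : ∀ᶠ x in nhdsWithin (4/κ) (Set.Ioi (4/κ)), 0 < F x :=
      nhdsWithin_le_nhds h1
    have h3 : ∀ᶠ x in nhdsWithin (4/κ) (Set.Ioi (4/κ)), x ∈ Set.Ioi (4/κ) :=
      eventually_mem_nhdsWithin
    obtain ⟨x, hx1, hx2⟩ := (h2.and h3).exists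
    exact ⟨x, hx1, hx2⟩
  have hxbpos : 0 < xb := lt_trans hx0 hxbgt
  set Jbar := hs 0 + Real.log xb with hJbar
  -- below Jbar the free energy vanishes
  have hzero : ∀ J : ℝ, J < Jbar → zeta hs J ≤ 0 := by
    intro J hJ
    have hg0 : Real.exp (J - hs 0) < xb := by
      have : J - hs 0 < Real.log xb := by linarith
      calc Real.exp (J - hs 0) < Real.exp (Real.log xb) := Real.exp_lt_exp.2 this
        _ = xb := Real.exp_log hxbpos
    have hFg : 0 < F (Real.exp (J - hs 0)) :=
      lt_of_lt_of_le hxbF (hFanti _ _ (Real.exp_pos _) hg0.le)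
    apply zeta_zero hs J hκ
    have hg1 : gseq hs J 1 = 2 * Real.exp (J - hs 0) + c * (Real.exp (J - hs 0))^2 := rfl
    have heq : 2 / gseq hs J 1 - (κ - 2 * c) / 4 = F (Real.exp (J - hs 0)) := by
      rw [hFdef, hg1]
    show 0 < 2 / gseq hs J 1 - (κ - 2 * c) / 4
    rw [heq]
    exact hFg
  -- a point where the free energy is positive
  set K := ∑' k : ℕ, |hs k| / 2 ^ k with hKdef
  have hpos : 0 < zeta hs (hs 0 + 2*K + 1) := by
    have := zeta_lb hs (hs 0 + 2*K + 1) hmono hsum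
    calc (0:ℝ) < 1 := by norm_num
      _ = (hs 0 + 2*K + 1) - hs 0 - 2*K := by ring
      _ ≤ zeta hs (hs 0 + 2*K + 1) := this
  have hne : {J : ℝ | 0 < zeta hs J}.Nonempty := ⟨hs 0 + 2*K + 1, hpos⟩
  have hlb : ∀ J ∈ {J : ℝ | 0 < zeta hs J}, Jbar ≤ J := by
    intro J hJ
    by_contra hlt
    push_neg at hlt
    exact absurd hJ (not_lt.2 (hzero J hlt))
  have hbdd : BddBelow {J : ℝ | 0 < zeta hs J} := ⟨Jbar, hlb⟩
  refine ⟨fun J => zeta hs J, fun J => zeta_tendsto hs J hmono, sInf {J : ℝ | 0 < zeta hs J},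
    isGLB_csInf hne hbdd, ?_⟩
  have hJs : Jbar ≤ sInf {J : ℝ | 0 < zeta hs J} := le_csInf hne hlb
  have hBlt : 2 * Real.log 2 + hs 0 - Real.log κ < Jbar := by
    rw [hJbar]
    have h4 : 2 * Real.log 2 = Real.log 4 := by
      rw [show (4:ℝ) = 2^2 by norm_num, Real.log_pow]
      push_cast; ring
    have hlt : Real.log (4/κ) < Real.log xb := Real.log_lt_log hx0 hxbgt
    rw [Real.log_div (by norm_num) (ne_of_gt hκpos)] at hlt
    linarith
  linarith


/-- Proposition 1.13: for non-decreasing `(h_k)` with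
`∑ 2⁻ᵏ h_k < ∞` and first order branching clustering functions `Φ_n`, if
`κ₁ = ∑_{k≥1} 2ᵏ e^{-h_k} < ∞` then there is a wetting transition, with
`J* ∈ (2 ln 2 + h₀ - ln κ₁, ∞)`. -/
theorem stmt7 (hs : ℕ → ℝ) (hmono : Monotone hs)
    (hsum : Summable fun k : ℕ => hs k / 2 ^ k)
    (hκ : Summable fun k : ℕ => (2 : ℝ) ^ (k + 1) * Real.exp (-hs (k + 1))) :
    ∃ ζ : ℝ → ℝ,
      (∀ J : ℝ, Tendsto (fun n => zetaN n (foPhi n hs (hs n)) J) atTop (nhds (ζ J))) ∧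
      ∃ Js : ℝ, IsGLB {J : ℝ | 0 < ζ J} Js ∧
        2 * Real.log 2 + hs 0 -
          Real.log (∑' k : ℕ, (2 : ℝ) ^ (k + 1) * Real.exp (-hs (k + 1))) < Js := by
  exact stmt7' hs hmono hsum hκ

end PWC
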